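/- A positive integer t can be written as m² − mn + n² for some integers m, n if and only if in the prime factorization of t, the prime 2 and every prime congruent to 5 modulo 6 occur to an even exponent. -/

import Mathlib

private lemma comp_id (a b c d : ℤ) :
    (a^2 - a*b + b^2) * (c^2 - c*d + d^2) =
      (a*c - a*d + b*d)^2 - (a*c - a*d + b*d)*(c*b - a*d) + (c*b - a*d)^2 := by ring

private lemma form_nonneg (a b : ℤ) : 0 ≤ a^2 - a*b + b^2 := by nlinarith [sq_nonneg (a-b), sq_nonneg a, sq_nonneg b]

private lemma form_eq_zero {a b : ℤ} (h : a^2 - a*b + b^2 = 0) : a = 0 ∧ b = 0 := by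
  constructor <;> nlinarith [sq_nonneg (2*a-b), sq_nonneg (2*b-a), sq_nonneg (a-b)]

private lemma no_root {p : ℕ} (hp : p.Prime) (h3 : p % 3 = 2) (w : ZMod p) :
    w^2 + w + 1 ≠ 0 := by
  haveI : Fact p.Prime := ⟨hp⟩
  intro hw
  have hw0 : w ≠ 0 := by rintro rfl; simp at hw
  have hw3 : w^3 = 1 := by linear_combination (w - 1) * hw
  have hw1 : w ≠ 1 := by
    rintro rfl
    have : ((3 : ℕ) : ZMod p) = 0 := by push_cast; linear_combination hw
    have := (ZMod.natCast_eq_zero_iff 3 p).mp this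
    have := (Nat.prime_dvd_prime_iff_eq hp Nat.prime_three).mp this
    omega
  have hu : IsUnit w := IsUnit.of_mul_eq_one (a := w) (w^2) (by linear_combination hw3)
  obtain ⟨u, hu⟩ := hu
  have hu3 : u ^ 3 = 1 := by ext; push_cast [hu]; exact hw3
  have hu1 : u ≠ 1 := by rintro rfl; exact hw1 (by simp [← hu])
  have ho : orderOf u = 3 := by
    have hdvd := orderOf_dvd_of_pow_eq_one hu3
    rcases (Nat.prime_three).eq_one_or_self_of_dvd _ hdvd with h | h
    · exact absurd (orderOf_eq_one_iff.mp h) hu1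
    · exact h
  have hcard : orderOf u ∣ Fintype.card (ZMod p)ˣ := orderOf_dvd_card
  rw [ho, ZMod.card_units] at hcard
  have hp2 : 2 ≤ p := hp.two_le
  omega

private lemma dvd_of_dvd_form {p : ℕ} (hp : p.Prime) (h3 : p % 3 = 2) {m n : ℤ}
    (h : (p : ℤ) ∣ m^2 - m*n + n^2) : (p : ℤ) ∣ m ∧ (p : ℤ) ∣ n := by
  haveI : Fact p.Prime := ⟨hp⟩
  have h0 : ((m^2 - m*n + n^2 : ℤ) : ZMod p) = 0 := by
    exact_mod_cast (ZMod.intCast_zmod_eq_zero_iff_dvd _ _).mpr h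
  push_cast at h0
  have key : (m : ZMod p) = 0 ∧ (n : ZMod p) = 0 := by
    by_cases hn : (n : ZMod p) = 0
    · refine ⟨?_, hn⟩
      have : (m : ZMod p)^2 = 0 := by rw [hn] at h0; linear_combination h0
      exact pow_eq_zero_iff two_ne_zero |>.mp this
    · exfalso
      set z : ZMod p := (m : ZMod p) * (n : ZMod p)⁻¹ with hz
      have hzeq : z^2 - z + 1 = 0 := by
        have hni : (n : ZMod p) * (n : ZMod p)⁻¹ = 1 := ZMod.mul_inv_of_unit _ (Ne.isUnit hn)
        have : z = (m : ZMod p) * (n : ZMod p)⁻¹ := hz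
        rw [this]
        linear_combination ((n : ZMod p)⁻¹)^2 * h0 +
          ((m : ZMod p) * (n : ZMod p)⁻¹ - 1 - (n : ZMod p) * (n : ZMod p)⁻¹) * hni
      exact no_root hp h3 (-z) (by linear_combination hzeq)
  constructor
  · exact (ZMod.intCast_zmod_eq_zero_iff_dvd _ _).mp key.1
  · exact (ZMod.intCast_zmod_eq_zero_iff_dvd _ _).mp key.2

private lemma exists_root {p : ℕ} (hp : p.Prime) (h3 : p % 3 = 1) :
    ∃ w : ZMod p, w^2 + w + 1 = 0 := by
  haveI : Fact p.Prime := ⟨hp⟩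
  haveI : Fact (Nat.Prime 3) := ⟨Nat.prime_three⟩
  have hp2 : 2 ≤ p := hp.two_le
  have hdvd : 3 ∣ Fintype.card (ZMod p)ˣ := by rw [ZMod.card_units]; omega
  obtain ⟨u, hu⟩ := exists_prime_orderOf_dvd_card 3 hdvd
  refine ⟨(u : (ZMod p)ˣ), ?_⟩
  have hu3 : (u : ZMod p)^3 = 1 := by
    have h : u ^ 3 = 1 := by rw [← hu]; exact pow_orderOf_eq_one u
    have := congrArg Units.val h
    simpa using this
  have hu1 : (u : ZMod p) ≠ 1 := by
    intro h
    have : u = 1 := Units.ext h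
    rw [this, orderOf_one] at hu; omega
  have hfac : ((u : ZMod p) - 1) * ((u : ZMod p)^2 + (u : ZMod p) + 1) = 0 := by
    linear_combination hu3
  rcases mul_eq_zero.mp hfac with h | h
  · exact absurd (by linear_combination h) hu1
  · exact h
private lemma descent {p : ℕ} (hp : p.Prime) :
    ∀ k : ℕ, 0 < k → k < p → (∃ a b : ℤ, (k : ℤ) * p = a^2 - a*b + b^2) →
      ∃ m n : ℤ, (p : ℤ) = m^2 - m*n + n^2 := by
  intro k
  induction k using Nat.strong_induction_on with
  | _ k ih =>
    rintro hk0 hkp ⟨a, b, hab⟩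
    rcases eq_or_ne k 1 with rfl | hk1
    · exact ⟨a, b, by simpa using hab⟩
    haveI : NeZero k := ⟨hk0.ne'⟩
    set a' : ℤ := ((a : ZMod k).valMinAbs) with ha'
    set b' : ℤ := ((b : ZMod k).valMinAbs) with hb'
    have hca : ((a' : ZMod k)) = ((a : ℤ) : ZMod k) := ZMod.coe_valMinAbs _
    have hcb : ((b' : ZMod k)) = ((b : ℤ) : ZMod k) := ZMod.coe_valMinAbs _
    -- bounds
    have hba : 2 * |a'| ≤ (k : ℤ) := by
      have h1 : a'.natAbs ≤ k / 2 := ZMod.natAbs_valMinAbs_le _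
      have h2 : 2 * a'.natAbs ≤ k := by omega
      calc 2 * |a'| = ((2 * a'.natAbs : ℕ) : ℤ) := by
            rw [Int.abs_eq_natAbs]; push_cast; ring
        _ ≤ (k : ℤ) := by exact_mod_cast h2
    have hbb : 2 * |b'| ≤ (k : ℤ) := by
      have h1 : b'.natAbs ≤ k / 2 := ZMod.natAbs_valMinAbs_le _
      have h2 : 2 * b'.natAbs ≤ k := by omega
      calc 2 * |b'| = ((2 * b'.natAbs : ℕ) : ℤ) := by
            rw [Int.abs_eq_natAbs]; push_cast; ring
        _ ≤ (k : ℤ) := by exact_mod_cast h2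
    -- k divides f(a',b')
    have hdvd : (k : ℤ) ∣ a'^2 - a'*b' + b'^2 := by
      rw [← ZMod.intCast_zmod_eq_zero_iff_dvd]
      push_cast
      rw [hca, hcb]
      have := congrArg (fun z : ℤ => ((z : ZMod k))) hab
      push_cast at this
      rw [← this]
      simp
    obtain ⟨k', hk'⟩ := hdvd
    have hk'0 : 0 ≤ k' := by nlinarith [form_nonneg a' b', hk', Int.natCast_pos.mpr hk0]
    have habs : -(a'*b') ≤ |a'| * |b'| := by rw [← abs_mul]; exact neg_le_abs (a'*b')
    have hsq : a'^2 = |a'|^2 := (sq_abs a').symm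
    have hsq' : b'^2 = |b'|^2 := (sq_abs b').symm
    have hklt : (k : ℤ) * k' < (k : ℤ) * k := by
      rw [← hk']
      nlinarith [habs, hsq, hsq', mul_le_mul hba hbb (by positivity) (by positivity),
        abs_nonneg a', abs_nonneg b']
    have hk'lt : k' < (k : ℤ) := by
      have hkpos : (0:ℤ) < (k:ℤ) := by positivity
      exact lt_of_mul_lt_mul_left hklt hkpos.le
    rcases eq_or_lt_of_le hk'0 with hk'z | hk'pos
    · -- k' = 0 : contradiction with k ≠ 1, k < p, k ∣ p
      exfalso
      have hf0 : a'^2 - a'*b' + b'^2 = 0 := by rw [hk', ← hk'z, mul_zero]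
      obtain ⟨ha0, hb0⟩ := form_eq_zero hf0
      have hda : (k : ℤ) ∣ a := by
        rw [← ZMod.intCast_zmod_eq_zero_iff_dvd, ← hca, ha0]; simp
      have hdb : (k : ℤ) ∣ b := by
        rw [← ZMod.intCast_zmod_eq_zero_iff_dvd, ← hcb, hb0]; simp
      obtain ⟨a₀, rfl⟩ := hda
      obtain ⟨b₀, rfl⟩ := hdb
      have hpk : (p : ℤ) = (k : ℤ) * (a₀^2 - a₀*b₀ + b₀^2) := by
        have hkne : (k : ℤ) ≠ 0 := by positivity
        apply mul_left_cancel₀ hkne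
        linear_combination hab
      have : (k : ℤ) ∣ (p : ℤ) := ⟨_, hpk⟩
      have hkp' : k ∣ p := Int.ofNat_dvd.mp this
      rcases (Nat.Prime.eq_one_or_self_of_dvd hp k hkp') with h | h
      · exact hk1 h
      · omega
    · -- descent step
      have e1 := comp_id a b a' b'
      rw [← hab, hk'] at e1
      have hdu : (k : ℤ) ∣ a*a' - a*b' + b*b' := by
        rw [← ZMod.intCast_zmod_eq_zero_iff_dvd]
        push_cast
        rw [hca, hcb]
        have := congrArg (fun z : ℤ => ((z : ZMod k))) hab
        push_cast at this
        have h2 : ((a : ℤ) : ZMod k) * a - a * b + b * b = ((a:ℤ):ZMod k)^2 - a*b + b^2 := by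
          ring
        rw [h2, ← this]
        simp
      have hdv : (k : ℤ) ∣ a'*b - a*b' := by
        rw [← ZMod.intCast_zmod_eq_zero_iff_dvd]
        push_cast
        rw [hca, hcb]
        ring
      obtain ⟨m, hm⟩ := hdu
      obtain ⟨n, hn⟩ := hdv
      rw [hm, hn] at e1
      have hkne : ((k : ℤ))^2 ≠ 0 := by positivity
      have e2 : (p : ℤ) * k' = m^2 - m*n + n^2 := by
        apply mul_left_cancel₀ hkne
        linear_combination e1
      refine ih k'.toNat ?_ ?_ ?_ ⟨m, n, ?_⟩
      · omega
      · omega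
      · omega
      · have hct : ((k'.toNat : ℕ) : ℤ) = k' := Int.toNat_of_nonneg hk'0
        rw [hct]
        linear_combination e2

private lemma prime_rep {p : ℕ} (hp : p.Prime) (h3 : p % 3 ≠ 2) :
    ∃ m n : ℤ, (p : ℤ) = m^2 - m*n + n^2 := by
  have hp2 : 2 ≤ p := hp.two_le
  have hm3 : p % 3 = 0 ∨ p % 3 = 1 := by omega
  rcases hm3 with h | h
  · -- p % 3 = 0, so p = 3
    have h30 : (3 : ℕ) ∣ p := Nat.dvd_of_mod_eq_zero h
    have : p = 3 := ((Nat.prime_dvd_prime_iff_eq Nat.prime_three hp).mp h30).symm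
    exact ⟨2, 1, by rw [this]; norm_num⟩
  · -- p % 3 = 1
    haveI : Fact p.Prime := ⟨hp⟩
    haveI : NeZero p := ⟨by omega⟩
    obtain ⟨w, hw⟩ := exists_root hp h
    set c : ℤ := w.valMinAbs with hc
    have hcw : ((c : ZMod p)) = w := ZMod.coe_valMinAbs w
    have hbc : 2 * |c| ≤ (p : ℤ) := by
      have h1 : c.natAbs ≤ p / 2 := ZMod.natAbs_valMinAbs_le w
      have h2 : 2 * c.natAbs ≤ p := by omega
      calc 2 * |c| = ((2 * c.natAbs : ℕ) : ℤ) := by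
            rw [Int.abs_eq_natAbs]; push_cast; ring
        _ ≤ (p : ℤ) := by exact_mod_cast h2
    have hdvd : (p : ℤ) ∣ c^2 + c + 1 := by
      rw [← ZMod.intCast_zmod_eq_zero_iff_dvd]
      push_cast
      rw [hcw]
      exact hw
    obtain ⟨k, hk⟩ := hdvd
    have hsq : c^2 = |c|^2 := (sq_abs c).symm
    have hcle : -|c| ≤ c := neg_abs_le c
    have hcle' : c ≤ |c| := le_abs_self c
    have hppos : (0:ℤ) < (p:ℤ) := by exact_mod_cast hp.pos
    have hkpos : 0 < k := by nlinarith [sq_nonneg (2*c+1)]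
    have hklt : k < (p : ℤ) := by nlinarith [sq_nonneg (2*c+1), abs_nonneg c]
    refine descent hp k.toNat (by omega) (by omega) ⟨c, -1, ?_⟩
    have hct : ((k.toNat : ℕ) : ℤ) = k := Int.toNat_of_nonneg hkpos.le
    rw [hct]
    linear_combination -hk

private lemma even_of_rep : ∀ t : ℕ, (∃ m n : ℤ, (t : ℤ) = m^2 - m*n + n^2) →
    ∀ p : ℕ, p.Prime → p % 3 = 2 → Even (t.factorization p) := by
  intro t
  induction t using Nat.strong_induction_on with
  | _ t ih =>
    rintro ⟨m, n, hmn⟩ p hp h3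
    rcases eq_or_ne t 0 with rfl | ht0
    · simp
    by_cases hpd : p ∣ t
    · have hpz : (p : ℤ) ∣ m^2 - m*n + n^2 := by
        rw [← hmn]; exact_mod_cast Int.natCast_dvd_natCast.mpr hpd
      obtain ⟨hm, hn⟩ := dvd_of_dvd_form hp h3 hpz
      obtain ⟨m', rfl⟩ := hm
      obtain ⟨n', rfl⟩ := hn
      have hdt : (p^2 : ℕ) ∣ t := by
        have : ((p^2 : ℕ) : ℤ) ∣ (t : ℤ) := by
          push_cast
          exact ⟨m'^2 - m'*n' + n'^2, by linear_combination hmn⟩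
        exact_mod_cast Int.natCast_dvd_natCast.mp (by exact_mod_cast this)
      obtain ⟨t', ht'⟩ := hdt
      have ht'0 : t' ≠ 0 := by rintro rfl; simp at ht'; exact ht0 ht'
      have hp1 : 1 < p := hp.one_lt
      have ht'lt : t' < t := by
        have hppos : 0 < t' := Nat.pos_of_ne_zero ht'0
        have hp4 : 2 ≤ p^2 := by nlinarith
        rw [ht']
        calc t' < 2 * t' := by omega
          _ ≤ p^2 * t' := Nat.mul_le_mul_right _ hp4
      have ht'rep : (t' : ℤ) = m'^2 - m'*n' + n'^2 := by
        have hpne : ((p:ℤ))^2 ≠ 0 := by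
          have : (0:ℤ) < (p:ℤ) := by exact_mod_cast hp.pos
          positivity
        apply mul_left_cancel₀ hpne
        have : (t : ℤ) = ((p:ℤ))^2 * (t' : ℤ) := by exact_mod_cast congrArg (Nat.cast (R := ℤ)) ht'
        rw [← this]
        linear_combination hmn
      have hfac : t.factorization p = 2 + t'.factorization p := by
        rw [ht', Nat.factorization_mul (by positivity) ht'0, Finsupp.add_apply,
          Nat.Prime.factorization_pow hp, Finsupp.single_apply]
        simp
      rw [hfac]
      obtain ⟨r, hr⟩ := ih t' ht'lt ⟨m', n', ht'rep⟩ p hp h3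
      exact ⟨r + 1, by omega⟩
    · rw [Nat.factorization_eq_zero_of_not_dvd hpd]
      exact Even.zero

private lemma rep_of_even : ∀ t : ℕ, 0 < t →
    (∀ p : ℕ, p.Prime → p % 3 = 2 → Even (t.factorization p)) →
    ∃ m n : ℤ, (t : ℤ) = m^2 - m*n + n^2 := by
  intro t
  induction t using Nat.strong_induction_on with
  | _ t ih =>
    intro ht0 H
    rcases eq_or_ne t 1 with rfl | ht1
    · exact ⟨1, 0, by norm_num⟩
    set p := t.minFac with hpdef
    have hp : p.Prime := Nat.minFac_prime ht1
    have hpd : p ∣ t := t.minFac_dvd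
    have hp1 : 1 < p := hp.one_lt
    by_cases hgood : p % 3 = 2
    · -- bad prime: p^2 divides t
      have hfp : 2 ≤ t.factorization p := by
        have h1 : 0 < t.factorization p := hp.factorization_pos_of_dvd ht0.ne' hpd
        obtain ⟨r, hr⟩ := H p hp hgood
        omega
      have hdt : p^2 ∣ t := (Nat.Prime.pow_dvd_iff_le_factorization hp ht0.ne').mpr hfp
      obtain ⟨t', ht'⟩ := hdt
      have ht'0 : 0 < t' := by
        rcases Nat.eq_zero_or_pos t' with rfl | h
        · simp at ht'; omega
        · exact h
      have ht'lt : t' < t := by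
        have hp4 : 2 ≤ p^2 := by nlinarith
        rw [ht']
        calc t' < 2 * t' := by omega
          _ ≤ p^2 * t' := Nat.mul_le_mul_right _ hp4
      have hfac : ∀ q, t.factorization q = (if p = q then 2 else 0) + t'.factorization q := by
        intro q
        rw [ht', Nat.factorization_mul (by positivity) ht'0.ne', Finsupp.add_apply,
          Nat.Prime.factorization_pow hp, Finsupp.single_apply]
      have H' : ∀ q : ℕ, q.Prime → q % 3 = 2 → Even (t'.factorization q) := by
        intro q hq hq3
        have hEq := H q hq hq3
        rw [hfac q] at hEq
        by_cases hqp : p = q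
        · rw [if_pos hqp] at hEq
          obtain ⟨r, hr⟩ := hEq
          exact ⟨r - 1, by omega⟩
        · rw [if_neg hqp] at hEq
          simpa using hEq
      obtain ⟨a, b, hab⟩ := ih t' ht'lt ht'0 H'
      refine ⟨(p:ℤ)*a - (p:ℤ)*b + 0*b, a*0 - (p:ℤ)*b, ?_⟩
      have hcast : (t : ℤ) = ((p:ℤ)^2 - (p:ℤ)*0 + 0^2) * (a^2 - a*b + b^2) := by
        rw [← hab]
        push_cast [ht']
        ring
      rw [hcast, comp_id]
    · -- good prime
      obtain ⟨c, d, hcd⟩ := prime_rep hp hgood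
      obtain ⟨t', ht'⟩ := hpd
      have ht'0 : 0 < t' := by
        rcases Nat.eq_zero_or_pos t' with rfl | h
        · simp at ht'; omega
        · exact h
      have ht'lt : t' < t := by
        rw [ht']
        calc t' < 2 * t' := by omega
          _ ≤ p * t' := Nat.mul_le_mul_right _ hp.two_le
      have H' : ∀ q : ℕ, q.Prime → q % 3 = 2 → Even (t'.factorization q) := by
        intro q hq hq3
        have hqp : q ≠ p := by rintro rfl; exact hgood hq3
        have := H q hq hq3
        rw [ht', Nat.factorization_mul (by omega) ht'0.ne', Finsupp.add_apply,
          Nat.Prime.factorization hp, Finsupp.single_apply, if_neg (by exact fun h => hqp h.symm)] at this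
        simpa using this
      obtain ⟨a, b, hab⟩ := ih t' ht'lt ht'0 H'
      refine ⟨c*a - c*b + d*b, a*d - c*b, ?_⟩
      have hcast : (t : ℤ) = (c^2 - c*d + d^2) * (a^2 - a*b + b^2) := by
        rw [← hcd, ← hab]
        push_cast [ht']
        ring
      rw [hcast, comp_id]

theorem euler_6k1 (t : ℕ) (ht : 0 < t) :
    (∃ m n : ℤ, (t : ℤ) = m ^ 2 - m * n + n ^ 2) ↔
      ∀ p : ℕ, p.Prime → (p = 2 ∨ p % 6 = 5) → Even (t.factorization p) := by
  constructor
  · rintro ⟨m, n, hmn⟩ p hp hcond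
    have h3 : p % 3 = 2 := by rcases hcond with rfl | h6 <;> omega
    exact even_of_rep t ⟨m, n, hmn⟩ p hp h3
  · intro H
    apply rep_of_even t ht
    intro p hp h3
    apply H p hp
    rcases hp.eq_two_or_odd with h2 | hodd
    · exact Or.inl h2
    · exact Or.inr (by omega)
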